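/- Consider a game with N players with continuously differentiable payoff functions f_i : ℝ^N → ℝ whose pseudogradient G(x) = (∂f_1/∂x_1(x),…,∂f_N/∂x_N(x)) satisfies (x − z)ᵀ(G(x) − G(z)) ≤ −m‖x − z‖² for all x, z ∈ ℝ^N and some m > 0, and let x* be the unique point with G(x*) = 0. Fix positive constants k̄_1,…,k̄_N and let k̄_max = max_i k̄_i, k̄_min = min_i k̄_i. Then every solution x(t) of the gradient play dynamics ẋ_i = k̄_i ∂f_i/∂x_i(x) converges exponentially to x*: ‖x(t) − x*‖ ≤ √(k̄_max/k̄_min) · e^{−m k̄_min t} · ‖x(0) − x*‖ for all t ≥ 0. -/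

import Mathlib

open scoped BigOperators

/-- Partial derivative of `f : ℝ^n → ℝ` with respect to the `j`-th coordinate at `x`. -/
noncomputable def pdv {n : ℕ} (f : (Fin n → ℝ) → ℝ) (j : Fin n) (x : Fin n → ℝ) : ℝ :=
  deriv (fun t => f (Function.update x j t)) (x j)

/-- Euclidean norm on `ℝ^n` (as functions `Fin n → ℝ`). -/
noncomputable def euclNorm {n : ℕ} (x : Fin n → ℝ) : ℝ :=
  Real.sqrt (∑ i, (x i) ^ 2)

theorem statement16 {N : ℕ} (hN : 0 < N) (f : Fin N → (Fin N → ℝ) → ℝ)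
    (hf : ∀ i, ContDiff ℝ 1 (f i))
    (m : ℝ) (hm : 0 < m)
    (hmono : ∀ x z : Fin N → ℝ,
      ∑ i, (x i - z i) * (pdv (f i) i x - pdv (f i) i z) ≤ -m * ∑ i, (x i - z i) ^ 2)
    (xs : Fin N → ℝ) (hxs : ∀ i, pdv (f i) i xs = 0)
    (k : Fin N → ℝ) (hk : ∀ i, 0 < k i)
    (kmax kmin : ℝ)
    (hkmax : IsGreatest (Set.range k) kmax)
    (hkmin : IsLeast (Set.range k) kmin) :
    ∀ x : ℝ → Fin N → ℝ,
      (∀ t, 0 ≤ t → ∀ i, HasDerivAt (fun s => x s i) (k i * pdv (f i) i (x t)) t) →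
      ∀ t, 0 ≤ t →
        euclNorm (fun i => x t i - xs i) ≤
          Real.sqrt (kmax / kmin) * Real.exp (-m * kmin * t) *
            euclNorm (fun i => x 0 i - xs i) := by
  intro x hx t ht
  obtain ⟨imin, himin⟩ := hkmin.1
  obtain ⟨imax, himax⟩ := hkmax.1
  have hkmin0 : 0 < kmin := himin ▸ hk imin
  have hkmax0 : 0 < kmax := himax ▸ hk imax
  set W : ℝ → ℝ := fun s => ∑ i, (x s i - xs i) ^ 2 / k i with hWdef
  set c : ℝ := 2 * m * kmin with hcdef
  have hc0 : 0 < c := by positivity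
  set g : ℝ → ℝ := fun s => W s * Real.exp (c * s) with hgdef
  -- derivative of W
  have hWd : ∀ s, 0 ≤ s →
      HasDerivAt W (∑ i, 2 * (x s i - xs i) * pdv (f i) i (x s)) s := by
    intro s hs
    have h1 : ∀ i : Fin N, HasDerivAt (fun u => (x u i - xs i) ^ 2 / k i)
        (2 * (x s i - xs i) ^ 1 * (k i * pdv (f i) i (x s)) / k i) s := by
      intro i
      exact (((hx s hs i).sub_const (xs i)).pow 2).div_const (k i)
    have hsum := HasDerivAt.fun_sum (fun i (_ : i ∈ Finset.univ) => h1 i)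
    convert hsum using 1
    · rfl
    · rfl
    refine Finset.sum_congr rfl fun i _ => ?_
    have hki : k i ≠ 0 := (hk i).ne'
    field_simp
  -- W s nonneg, and comparison with sums of squares
  have hWnonneg : ∀ s, 0 ≤ W s := by
    intro s
    apply Finset.sum_nonneg
    intro i _
    exact div_nonneg (sq_nonneg _) (hk i).le
  have hlow : ∀ s, kmin * W s ≤ ∑ i, (x s i - xs i) ^ 2 := by
    intro s
    rw [Finset.mul_sum]
    apply Finset.sum_le_sum
    intro i _
    have hki : kmin ≤ k i := hkmin.2 ⟨i, rfl⟩
    rw [mul_div_assoc']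
    rw [div_le_iff₀ (hk i)]
    have : (x s i - xs i) ^ 2 * kmin ≤ (x s i - xs i) ^ 2 * k i := by
      apply mul_le_mul_of_nonneg_left hki (by positivity)
    linarith [this]
  have hup : ∀ s, ∑ i, (x s i - xs i) ^ 2 ≤ kmax * W s := by
    intro s
    rw [Finset.mul_sum]
    apply Finset.sum_le_sum
    intro i _
    have hki : k i ≤ kmax := hkmax.2 ⟨i, rfl⟩
    rw [mul_div_assoc']
    rw [le_div_iff₀ (hk i)]
    nlinarith [mul_le_mul_of_nonneg_left hki (sq_nonneg (x s i - xs i))]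
  -- differential inequality
  have hWle : ∀ s, 0 ≤ s →
      ∑ i, 2 * (x s i - xs i) * pdv (f i) i (x s) ≤ -c * W s := by
    intro s hs
    have h1 := hmono (x s) xs
    simp only [hxs, sub_zero] at h1
    have h2 : ∑ i, 2 * (x s i - xs i) * pdv (f i) i (x s)
        = 2 * ∑ i, (x s i - xs i) * pdv (f i) i (x s) := by
      rw [Finset.mul_sum]; refine Finset.sum_congr rfl fun i _ => by ring
    have h3 : -m * ∑ i, (x s i - xs i) ^ 2 ≤ -m * (kmin * W s) := by
      apply mul_le_mul_of_nonpos_left (hlow s) (by linarith)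
    rw [h2, hcdef]
    nlinarith [h1, h3]
  -- g is antitone on [0, ∞)
  have hgd : ∀ s, 0 ≤ s → HasDerivAt g
      ((∑ i, 2 * (x s i - xs i) * pdv (f i) i (x s)) * Real.exp (c * s)
        + W s * (Real.exp (c * s) * c)) s := by
    intro s hs
    have he : HasDerivAt (fun u => Real.exp (c * u)) (Real.exp (c * s) * c) s := by
      have : HasDerivAt (fun u : ℝ => c * u) c s := by
        simpa using (hasDerivAt_id s).const_mul c
      exact this.exp
    exact (hWd s hs).mul he
  have hgA : AntitoneOn g (Set.Ici 0) := by
    apply antitoneOn_of_deriv_nonpos (convex_Ici 0)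
    · intro s hs
      exact ((hgd s hs).continuousAt).continuousWithinAt
    · rw [interior_Ici]
      intro s hs
      exact (hgd s (le_of_lt hs)).differentiableAt.differentiableWithinAt
    · rw [interior_Ici]
      intro s hs
      rw [(hgd s (le_of_lt hs)).deriv]
      have h1 := hWle s (le_of_lt hs)
      have h2 : 0 < Real.exp (c * s) := Real.exp_pos _
      nlinarith [h1, h2, hWnonneg s]
  have hgt : g t ≤ g 0 := hgA (Set.self_mem_Ici) (Set.mem_Ici.mpr ht) ht
  have hg0 : g 0 = W 0 := by simp [hgdef]
  have hWt : W t ≤ W 0 * Real.exp (-c * t) := by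
    have h2 : 0 < Real.exp (c * t) := Real.exp_pos _
    have key : W t * Real.exp (c * t) ≤ W 0 := by rw [← hg0]; exact hgt
    have h3 : Real.exp (-c * t) = (Real.exp (c * t))⁻¹ := by
      rw [← Real.exp_neg]; ring_nf
    rw [h3, ← div_eq_mul_inv, le_div_iff₀ h2]
    exact key
  -- assemble
  have hSt : ∑ i, (x t i - xs i) ^ 2
      ≤ (kmax / kmin) * Real.exp (-c * t) * ∑ i, (x 0 i - xs i) ^ 2 := by
    have h1 := hup t
    have h2 : W 0 ≤ (1 / kmin) * ∑ i, (x 0 i - xs i) ^ 2 := by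
      rw [one_div, inv_mul_eq_div, le_div_iff₀ hkmin0, mul_comm]
      exact hlow 0
    have h3 : kmax * (W 0 * Real.exp (-c * t))
        ≤ kmax * ((1 / kmin) * (∑ i, (x 0 i - xs i) ^ 2) * Real.exp (-c * t)) := by
      apply mul_le_mul_of_nonneg_left _ (le_of_lt hkmax0)
      apply mul_le_mul_of_nonneg_right h2 (le_of_lt (Real.exp_pos _))
    have h4 : kmax * W t ≤ kmax * (W 0 * Real.exp (-c * t)) := by
      apply mul_le_mul_of_nonneg_left (hWt) (le_of_lt hkmax0)
    calc ∑ i, (x t i - xs i) ^ 2 ≤ kmax * W t := h1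
      _ ≤ kmax * ((1 / kmin) * (∑ i, (x 0 i - xs i) ^ 2) * Real.exp (-c * t)) :=
          le_trans h4 h3
      _ = (kmax / kmin) * Real.exp (-c * t) * ∑ i, (x 0 i - xs i) ^ 2 := by ring
  have hexp : Real.exp (-c * t) = (Real.exp (-m * kmin * t)) ^ 2 := by
    rw [sq, ← Real.exp_add, hcdef]; ring_nf
  have hfinal : euclNorm (fun i => x t i - xs i)
      ≤ Real.sqrt ((kmax / kmin) * Real.exp (-c * t) * ∑ i, (x 0 i - xs i) ^ 2) := by
    unfold euclNorm
    exact Real.sqrt_le_sqrt hSt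
  calc euclNorm (fun i => x t i - xs i)
      ≤ Real.sqrt ((kmax / kmin) * Real.exp (-c * t) * ∑ i, (x 0 i - xs i) ^ 2) := hfinal
    _ = Real.sqrt (kmax / kmin) * Real.exp (-m * kmin * t)
        * euclNorm (fun i => x 0 i - xs i) := by
        unfold euclNorm
        rw [Real.sqrt_mul (by positivity), Real.sqrt_mul (by positivity), hexp,
          Real.sqrt_sq (le_of_lt (Real.exp_pos _)), mul_assoc]
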